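/- The edge set of the complete graph on n vertices can be decomposed into pairwise edge-disjoint triangles if and only if n ≡ 1 or 3 (mod 6). -/

import Mathlib

open scoped Classical

def IsSTS {V : Type*} [DecidableEq V] (T : Finset (Finset V)) : Prop :=
  (∀ t ∈ T, ∃ a b c : V, a ≠ b ∧ a ≠ c ∧ b ≠ c ∧ t = {a, b, c}) ∧
  (∀ a b : V, a ≠ b → ∃! t, t ∈ T ∧ a ∈ t ∧ b ∈ t)

theorem IsSTS.map {V W : Type*} [DecidableEq V] [DecidableEq W] {T : Finset (Finset V)}
    (h : IsSTS T) (e : V ≃ W) : IsSTS (T.image (fun t => t.map e.toEmbedding)) := by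
  obtain ⟨h1, h2⟩ := h
  constructor
  · rintro t ht
    simp only [Finset.mem_image] at ht
    obtain ⟨u, hu, rfl⟩ := ht
    obtain ⟨a, b, c, hab, hac, hbc, rfl⟩ := h1 u hu
    exact ⟨e a, e b, e c, by simpa using hab, by simpa using hac, by simpa using hbc, by
      ext x; simp [Finset.mem_map_equiv]⟩
  · intro a b hab
    obtain ⟨t, ⟨ht, hat, hbt⟩, huniq⟩ := h2 (e.symm a) (e.symm b) (by simpa using hab)
    refine ⟨t.map e.toEmbedding, ⟨Finset.mem_image_of_mem _ ht, ?_, ?_⟩, ?_⟩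
    · simpa [Finset.mem_map_equiv] using hat
    · simpa [Finset.mem_map_equiv] using hbt
    · rintro u ⟨hu, hau, hbu⟩
      simp only [Finset.mem_image] at hu
      obtain ⟨v, hv, rfl⟩ := hu
      rw [Finset.mem_map_equiv] at hau hbu
      rw [huniq v ⟨hv, hau, hbu⟩]

def edgesOf {V : Type*} [DecidableEq V] (t : Finset V) : Finset (Sym2 V) :=
  t.sym2.filter (fun e => ¬ e.IsDiag)

theorem mem_edgesOf {V : Type*} [DecidableEq V] {t : Finset V} {x y : V} (hxy : x ≠ y) :
    s(x, y) ∈ edgesOf t ↔ x ∈ t ∧ y ∈ t := by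
  simp [edgesOf, Finset.mem_sym2_iff, hxy]

theorem edgesOf_triple {V : Type*} [DecidableEq V] {a b c : V}
    (hab : a ≠ b) (hac : a ≠ c) (hbc : b ≠ c) :
    edgesOf ({a, b, c} : Finset V) = {s(a, b), s(a, c), s(b, c)} := by
  ext e
  induction e with
  | _ x y =>
    simp only [edgesOf, Finset.mem_filter, Finset.mem_sym2_iff, Sym2.mem_iff,
      Finset.mem_insert, Finset.mem_singleton, Sym2.isDiag_iff_proj_eq, Sym2.eq_iff]
    constructor
    · rintro ⟨h, hd⟩
      have hx := h x (by simp)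
      have hy := h y (by simp)
      aesop
    · aesop

theorem sts_to_decomp {n : ℕ} {T : Finset (Finset (Fin n))} (h : IsSTS T) :
    ∃ P : Finset (Finset (Sym2 (Fin n))),
      (∀ t ∈ P, ∃ a b c : Fin n, a ≠ b ∧ a ≠ c ∧ b ≠ c ∧
        t = {s(a, b), s(a, c), s(b, c)}) ∧
      (∀ e ∈ (⊤ : SimpleGraph (Fin n)).edgeFinset, ∃! t, t ∈ P ∧ e ∈ t) := by
  obtain ⟨h1, h2⟩ := h
  refine ⟨T.image edgesOf, ?_, ?_⟩
  · rintro t ht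
    simp only [Finset.mem_image] at ht
    obtain ⟨u, hu, rfl⟩ := ht
    obtain ⟨a, b, c, hab, hac, hbc, rfl⟩ := h1 u hu
    exact ⟨a, b, c, hab, hac, hbc, edgesOf_triple hab hac hbc⟩
  · intro e he
    induction e with
    | _ x y =>
      have hxy : x ≠ y := by
        simpa [SimpleGraph.mem_edgeFinset] using he
      obtain ⟨t, ⟨ht, hxt, hyt⟩, huniq⟩ := h2 x y hxy
      refine ⟨edgesOf t, ⟨Finset.mem_image_of_mem _ ht, (mem_edgesOf hxy).2 ⟨hxt, hyt⟩⟩, ?_⟩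
      rintro u ⟨hu, heu⟩
      simp only [Finset.mem_image] at hu
      obtain ⟨v, hv, rfl⟩ := hu
      rw [mem_edgesOf hxy] at heu
      rw [huniq v ⟨hv, heu.1, heu.2⟩]

theorem even_filter {n : ℕ} {a b c v : Fin n}
    (hab : a ≠ b) (hac : a ≠ c) (hbc : b ≠ c) :
    Even (({s(a, b), s(a, c), s(b, c)} : Finset (Sym2 (Fin n))).filter (fun e => v ∈ e)).card := by
  by_cases hva : v = a
  · subst hva
    have : (({s(v, b), s(v, c), s(b, c)} : Finset (Sym2 (Fin n))).filter (fun e => v ∈ e))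
        = {s(v, b), s(v, c)} := by
      ext e; simp only [Finset.mem_filter, Finset.mem_insert, Finset.mem_singleton,
        Sym2.mem_iff]; aesop
    rw [this, Finset.card_insert_of_notMem (by simp [Sym2.eq_iff]; tauto),
      Finset.card_singleton]
    exact even_two
  · by_cases hvb : v = b
    · subst hvb
      have : (({s(a, v), s(a, c), s(v, c)} : Finset (Sym2 (Fin n))).filter (fun e => v ∈ e))
          = {s(a, v), s(v, c)} := by
        ext e; simp only [Finset.mem_filter, Finset.mem_insert, Finset.mem_singleton,
          Sym2.mem_iff]; aesop
      rw [this, Finset.card_insert_of_notMem (by simp [Sym2.eq_iff]; tauto),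
        Finset.card_singleton]
      exact even_two
    · by_cases hvc : v = c
      · subst hvc
        have : (({s(a, b), s(a, v), s(b, v)} : Finset (Sym2 (Fin n))).filter (fun e => v ∈ e))
            = {s(a, v), s(b, v)} := by
          ext e; simp only [Finset.mem_filter, Finset.mem_insert, Finset.mem_singleton,
            Sym2.mem_iff]; aesop
        rw [this, Finset.card_insert_of_notMem (by simp [Sym2.eq_iff]; tauto),
          Finset.card_singleton]
        exact even_two
      · have : (({s(a, b), s(a, c), s(b, c)} : Finset (Sym2 (Fin n))).filter (fun e => v ∈ e))
            = ∅ := by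
          ext e; simp only [Finset.mem_filter, Finset.mem_insert, Finset.mem_singleton,
            Sym2.mem_iff, Finset.notMem_empty, iff_false]; aesop
        rw [this]; simp

theorem decomp_mod {n : ℕ} (hn : 1 ≤ n)
    (P : Finset (Finset (Sym2 (Fin n))))
    (hP1 : ∀ t ∈ P, ∃ a b c : Fin n, a ≠ b ∧ a ≠ c ∧ b ≠ c ∧
      t = {s(a, b), s(a, c), s(b, c)})
    (hP2 : ∀ e ∈ (⊤ : SimpleGraph (Fin n)).edgeFinset, ∃! t, t ∈ P ∧ e ∈ t) :
    n % 6 = 1 ∨ n % 6 = 3 := by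
  set E := (⊤ : SimpleGraph (Fin n)).edgeFinset with hE
  -- every member of a triple is an edge
  have hsub : ∀ t ∈ P, t ⊆ E := by
    intro t ht
    obtain ⟨a, b, c, hab, hac, hbc, rfl⟩ := hP1 t ht
    intro e he
    simp only [Finset.mem_insert, Finset.mem_singleton] at he
    have : ¬ e.IsDiag := by
      rcases he with rfl | rfl | rfl <;> simpa [Sym2.isDiag_iff_proj_eq]
    simpa [hE, SimpleGraph.mem_edgeFinset] using this
  have hdisj : ∀ t1 ∈ P, ∀ t2 ∈ P, t1 ≠ t2 → Disjoint t1 t2 := by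
    intro t1 h1 t2 h2 hne
    rw [Finset.disjoint_left]
    intro e he1 he2
    obtain ⟨t, -, huniq⟩ := hP2 e (hsub t1 h1 he1)
    exact hne ((huniq t1 ⟨h1, he1⟩).trans (huniq t2 ⟨h2, he2⟩).symm)
  have hEU : E = P.biUnion (fun t => t) := by
    ext e
    simp only [Finset.mem_biUnion]
    constructor
    · intro he
      obtain ⟨t, ⟨ht, het⟩, -⟩ := hP2 e he
      exact ⟨t, ht, het⟩
    · rintro ⟨t, ht, het⟩
      exact hsub t ht het
  have hcard3 : ∀ t ∈ P, t.card = 3 := by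
    intro t ht
    obtain ⟨a, b, c, hab, hac, hbc, rfl⟩ := hP1 t ht
    rw [Finset.card_insert_of_notMem (by simp [Sym2.eq_iff]; tauto),
      Finset.card_insert_of_notMem (by simp [Sym2.eq_iff]; tauto), Finset.card_singleton]
  -- divisibility by 3
  have hdvd : 3 ∣ n.choose 2 := by
    have h1 : E.card = n.choose 2 := by
      rw [hE, SimpleGraph.card_edgeFinset_top_eq_card_choose_two, Fintype.card_fin]
    have h2 : E.card = 3 * P.card := by
      rw [hEU, Finset.card_biUnion (fun t ht u hu hne => hdisj t ht u hu hne)]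
      rw [Finset.sum_congr rfl (fun t ht => hcard3 t ht), Finset.sum_const, smul_eq_mul,
        Nat.mul_comm]
    exact ⟨P.card, by omega⟩
  -- parity
  have hodd : n % 2 = 1 := by
    set v : Fin n := ⟨0, hn⟩ with hv
    set Ev := E.filter (fun e => v ∈ e) with hEv
    have hEvcard : Ev.card = n - 1 := by
      have : Ev = (⊤ : SimpleGraph (Fin n)).incidenceFinset v := by
        rw [SimpleGraph.incidenceFinset_eq_filter]
      rw [this, SimpleGraph.card_incidenceFinset_eq_degree]
      have : (⊤ : SimpleGraph (Fin n)).neighborFinset v = Finset.univ.erase v := by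
        ext w
        simp [SimpleGraph.mem_neighborFinset, ne_comm]
      rw [SimpleGraph.degree, this, Finset.card_erase_of_mem (Finset.mem_univ v),
        Finset.card_univ, Fintype.card_fin]
    have hEvU : Ev = P.biUnion (fun t => t.filter (fun e => v ∈ e)) := by
      rw [hEv, hEU, Finset.filter_biUnion]
    have heven : Even Ev.card := by
      rw [hEvU, Finset.card_biUnion]
      · apply Finset.even_sum
        intro t ht
        obtain ⟨a, b, c, hab, hac, hbc, rfl⟩ := hP1 t ht
        exact even_filter hab hac hbc
      · intro t ht u hu hne
        exact Finset.disjoint_filter_filter (hdisj t ht u hu hne)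
    rw [hEvcard] at heven
    rcases heven with ⟨m, hm⟩
    omega
  -- arithmetic
  have h2 : 2 * n.choose 2 = n * (n - 1) := by
    rw [Nat.choose_two_right, Nat.mul_div_cancel']
    have hn1 : n - 1 + 1 = n := by omega
    have hev : Even (n * (n - 1)) := by
      rw [Nat.mul_comm]
      simpa [hn1] using Nat.even_mul_succ_self (n - 1)
    exact hev.two_dvd
  rcases hdvd with ⟨m, hm⟩
  -- rule out n % 6 = 5
  by_contra hcon
  push_neg at hcon
  have h5 : n % 6 = 5 := by omega
  obtain ⟨q, hq⟩ : ∃ q, n = 6 * q + 5 := ⟨n / 6, by omega⟩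
  have hexp : n * (n - 1) = 36 * (q * q) + 54 * q + 20 := by
    have : n - 1 = 6 * q + 4 := by omega
    rw [this, hq]; ring
  obtain ⟨Q, hQ⟩ : ∃ Q, q * q = Q := ⟨_, rfl⟩
  rw [hQ] at hexp
  omega

theorem bose (k : ℕ) :
    ∃ T : Finset (Finset (ZMod (2 * k + 1) × ZMod 3)), IsSTS T := by
  haveI : NeZero (2 * k + 1) := ⟨by omega⟩
  set R := ZMod (2 * k + 1) with hR
  set c : R := (k : R) + 1 with hc
  have h2c : (2 : R) * c = 1 := by
    have h0 : ((2 * k + 1 : ℕ) : R) = 0 := ZMod.natCast_self _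
    push_cast at h0
    rw [hc]; rw [Nat.cast_mul] at h0; linear_combination h0
  set op : R → R → R := fun x y => c * (x + y) with hop
  have op_comm : ∀ x y, op x y = op y x := by intro x y; simp only [hop]; ring
  have op_self : ∀ x, op x x = x := by
    intro x; simp only [hop]; linear_combination x * h2c
  have op_solve : ∀ x y, op x (2 * y - x) = y := by
    intro x y; simp only [hop]; linear_combination y * h2c
  have op_inj : ∀ x b b', op x b = op x b' → b = b' := by
    intro x b b' h
    simp only [hop] at h
    linear_combination 2 * h - (b - b') * h2c
  -- ZMod 3 facts
  have hall : ∀ i : ZMod 3, i = 0 ∨ i = 1 ∨ i = 2 := by decide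
  have hne1 : ∀ i : ZMod 3, i ≠ i + 1 := by decide
  have hne2 : ∀ i : ZMod 3, i ≠ i + 1 + 1 := by decide
  have hZ3 : ∀ i j : ZMod 3, i = j ∨ j = i + 1 ∨ i = j + 1 := by decide
  set V := R × ZMod 3 with hV
  set T : Finset (Finset V) :=
    (Finset.univ.image fun x : R => ({(x, 0), (x, 1), (x, 2)} : Finset V)) ∪
    ((Finset.univ.filter fun p : R × R × ZMod 3 => p.1 ≠ p.2.1).image
      fun p => ({(p.1, p.2.2), (p.2.1, p.2.2), (op p.1 p.2.1, p.2.2 + 1)} : Finset V)) with hT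
  have memT : ∀ t : Finset V, t ∈ T ↔
      (∃ x : R, t = {(x, 0), (x, 1), (x, 2)}) ∨
      (∃ x y : R, ∃ i : ZMod 3, x ≠ y ∧ t = {(x, i), (y, i), (op x y, i + 1)}) := by
    intro t
    simp only [hT, Finset.mem_union, Finset.mem_image, Finset.mem_filter, Finset.mem_univ,
      true_and]
    constructor
    · rintro (⟨x, rfl⟩ | ⟨⟨x, y, i⟩, hxy, rfl⟩)
      · exact Or.inl ⟨x, rfl⟩
      · exact Or.inr ⟨x, y, i, hxy, rfl⟩
    · rintro (⟨x, rfl⟩ | ⟨x, y, i, hxy, rfl⟩)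
      · exact Or.inl ⟨x, rfl⟩
      · exact Or.inr ⟨⟨x, y, i⟩, hxy, rfl⟩
  refine ⟨T, ?_, ?_⟩
  · intro t ht
    rw [memT] at ht
    rcases ht with ⟨x, rfl⟩ | ⟨x, y, i, hxy, rfl⟩
    · exact ⟨(x, 0), (x, 1), (x, 2),
        by simp only [ne_eq, Prod.mk.injEq, not_and]; intro _; decide,
        by simp only [ne_eq, Prod.mk.injEq, not_and]; intro _; decide,
        by simp only [ne_eq, Prod.mk.injEq, not_and]; intro _; decide, rfl⟩
    · refine ⟨(x, i), (y, i), (op x y, i + 1), by simp [hxy], ?_, ?_, rfl⟩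
      · simp only [ne_eq, Prod.mk.injEq, not_and]
        intro _; exact hne1 i
      · simp only [ne_eq, Prod.mk.injEq, not_and]
        intro _; exact hne1 i
  · -- helper: vertical pairs (x,i),(x,j), i ≠ j
    have Hvert : ∀ (x : R) (i j : ZMod 3), i ≠ j →
        ∃! t, t ∈ T ∧ (x, i) ∈ t ∧ (x, j) ∈ t := by
      intro x i j hij
      refine ⟨{(x, 0), (x, 1), (x, 2)}, ⟨(memT _).2 (Or.inl ⟨x, rfl⟩), ?_, ?_⟩, ?_⟩
      · rcases hall i with rfl | rfl | rfl <;> simp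
      · rcases hall j with rfl | rfl | rfl <;> simp
      · rintro u ⟨hu, hxu, hyu⟩
        rw [memT] at hu
        rcases hu with ⟨z, rfl⟩ | ⟨a, b, l, hab, rfl⟩
        · simp only [Finset.mem_insert, Finset.mem_singleton, Prod.mk.injEq] at hxu
          have : x = z := by tauto
          subst this
          rfl
        · simp only [Finset.mem_insert, Finset.mem_singleton, Prod.mk.injEq] at hxu hyu
          exfalso
          rcases hxu with ⟨rfl, rfl⟩ | ⟨rfl, rfl⟩ | ⟨hx, hi⟩
          · rcases hyu with ⟨-, h⟩ | ⟨h1, -⟩ | ⟨h1, -⟩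
            · exact hij h.symm
            · exact hab h1
            · exact hab (op_inj x b x (by rw [op_self]; exact h1.symm)).symm
          · rcases hyu with ⟨h1, -⟩ | ⟨-, h⟩ | ⟨h1, -⟩
            · exact hab h1.symm
            · exact hij h.symm
            · exact hab (op_inj x a x (by rw [op_self, op_comm]; exact h1.symm))
          · rcases hyu with ⟨h1, -⟩ | ⟨h1, -⟩ | ⟨-, h⟩
            · exact hab (op_inj a b a (by rw [op_self]; rw [h1] at hx; exact hx.symm)).symm
            · exact hab (op_inj b a b (by rw [op_self, op_comm]; rw [h1] at hx; exact hx.symm))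
            · exact hij (hi.trans h.symm)
    -- helper: mixed pairs (x,i),(y,i+1) with x ≠ y
    have Hmix : ∀ (x y : R) (i : ZMod 3), x ≠ y →
        ∃! t, t ∈ T ∧ (x, i) ∈ t ∧ (y, i + 1) ∈ t := by
      intro x y i hxy
      set b0 : R := 2 * y - x with hb0def
      have hb0 : op x b0 = y := op_solve x y
      have hxb0 : x ≠ b0 := by
        intro h
        exact hxy (by rw [← hb0, ← h, op_self])
      refine ⟨{(x, i), (b0, i), (y, i + 1)}, ⟨(memT _).2 (Or.inr ⟨x, b0, i, hxb0, by rw [hb0]⟩),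
        by simp, by simp⟩, ?_⟩
      rintro u ⟨hu, hxu, hyu⟩
      rw [memT] at hu
      rcases hu with ⟨z, rfl⟩ | ⟨a, b, l, hab, rfl⟩
      · exfalso
        simp only [Finset.mem_insert, Finset.mem_singleton, Prod.mk.injEq] at hxu hyu
        have h1 : x = z := by tauto
        have h2 : y = z := by tauto
        exact hxy (h1.trans h2.symm)
      · simp only [Finset.mem_insert, Finset.mem_singleton, Prod.mk.injEq] at hxu hyu
        rcases hxu with ⟨rfl, rfl⟩ | ⟨rfl, rfl⟩ | ⟨hx, hi⟩
        · rcases hyu with ⟨h1, h2⟩ | ⟨h1, h2⟩ | ⟨hy, -⟩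
          · exact absurd h2.symm (hne1 i)
          · exact absurd h2.symm (hne1 i)
          · have : b = b0 := op_inj x b b0 (by rw [hb0]; exact hy.symm)
            subst this
            rw [hb0]
        · rcases hyu with ⟨h1, h2⟩ | ⟨h1, h2⟩ | ⟨hy, -⟩
          · exact absurd h2.symm (hne1 i)
          · exact absurd h2.symm (hne1 i)
          · have : a = b0 := op_inj x a b0 (by rw [hb0, ← op_comm]; exact hy.symm)
            subst this
            rw [op_comm, hb0, Finset.insert_comm]
        · rcases hyu with ⟨h1, h2⟩ | ⟨h1, h2⟩ | ⟨hy, -⟩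
          · exact absurd (by rw [← h2] at hi; exact hi : i = i + 1 + 1) (hne2 i)
          · exact absurd (by rw [← h2] at hi; exact hi : i = i + 1 + 1) (hne2 i)
          · exact absurd (hx.trans hy.symm) hxy
    rintro ⟨x, i⟩ ⟨y, j⟩ hpq
    rcases hZ3 i j with rfl | rfl | rfl
    · -- same level, x ≠ y
      have hxy : x ≠ y := fun h => hpq (by rw [h])
      refine ⟨{(x, i), (y, i), (op x y, i + 1)}, ⟨(memT _).2 (Or.inr ⟨x, y, i, hxy, rfl⟩),
        by simp, by simp⟩, ?_⟩
      rintro u ⟨hu, hxu, hyu⟩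
      rw [memT] at hu
      rcases hu with ⟨z, rfl⟩ | ⟨a, b, l, hab, rfl⟩
      · exfalso
        simp only [Finset.mem_insert, Finset.mem_singleton, Prod.mk.injEq] at hxu hyu
        have h1 : x = z := by tauto
        have h2 : y = z := by tauto
        exact hxy (h1.trans h2.symm)
      · simp only [Finset.mem_insert, Finset.mem_singleton, Prod.mk.injEq] at hxu hyu
        rcases hxu with ⟨rfl, rfl⟩ | ⟨rfl, rfl⟩ | ⟨hx, hi⟩
        · rcases hyu with ⟨h1, -⟩ | ⟨rfl, -⟩ | ⟨hy, h2⟩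
          · exact absurd h1.symm hxy
          · rfl
          · exact absurd h2 (hne1 i)
        · rcases hyu with ⟨rfl, -⟩ | ⟨h1, -⟩ | ⟨hy, h2⟩
          · rw [op_comm, Finset.insert_comm]
          · exact absurd h1.symm hxy
          · exact absurd h2 (hne1 i)
        · exfalso
          rcases hyu with ⟨-, h2⟩ | ⟨-, h2⟩ | ⟨hy, -⟩
          · exact hne1 l (h2.symm.trans hi)
          · exact hne1 l (h2.symm.trans hi)
          · exact hxy (hx.trans hy.symm)
    · -- j = i + 1
      by_cases hxy : x = y
      · subst hxy
        exact Hvert x i (i + 1) (hne1 i)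
      · exact Hmix x y i hxy
    · -- i = j + 1
      by_cases hxy : x = y
      · subst hxy
        exact Hvert x (j + 1) j (fun h => hne1 j h.symm)
      · obtain ⟨t, ⟨ht, h1, h2⟩, hu⟩ := Hmix y x j (fun h => hxy h.symm)
        exact ⟨t, ⟨ht, h2, h1⟩, fun u ⟨ha, hb, hc⟩ => hu u ⟨ha, hc, hb⟩⟩

theorem skolem (k : ℕ) (hk : 1 ≤ k) :
    ∃ T : Finset (Finset (Option (ZMod (2 * k) × ZMod 3))), IsSTS T := by
  haveI : NeZero (2 * k) := ⟨by omega⟩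
  set A := ZMod (2 * k) with hA
  set f : ℕ → A := fun v => if v % 2 = 0 then ((v / 2 : ℕ) : A) else ((k + v / 2 : ℕ) : A)
    with hf
  set pi : A → A := fun z => f z.val with hpi
  set rho : A → A := fun z => if z.val < k then ((2 * z.val : ℕ) : A)
    else ((2 * (z.val - k) + 1 : ℕ) : A) with hrho
  have hcast : ∀ z : A, ((z.val : ℕ) : A) = z := fun z => ZMod.natCast_rightInverse z
  have pirho : ∀ z : A, pi (rho z) = z := by
    intro z
    have hz : z.val < 2 * k := ZMod.val_lt z
    by_cases h : z.val < k
    · have h1 : (rho z).val = 2 * z.val := by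
        rw [hrho]; simp only [h, if_pos]
        exact ZMod.val_natCast_of_lt (by omega)
      rw [hpi]; simp only [h1, hf]
      rw [if_pos (by omega)]
      rw [show 2 * z.val / 2 = z.val by omega, hcast]
    · have h1 : (rho z).val = 2 * (z.val - k) + 1 := by
        rw [hrho]; simp only [h, if_neg, if_false]
        exact ZMod.val_natCast_of_lt (by omega)
      rw [hpi]; simp only [h1, hf]
      rw [if_neg (by omega)]
      rw [show k + (2 * (z.val - k) + 1) / 2 = z.val by omega, hcast]
  have rhopi : ∀ z : A, rho (pi z) = z := by
    intro z
    have hz : z.val < 2 * k := ZMod.val_lt z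
    by_cases h : z.val % 2 = 0
    · have h1 : (pi z).val = z.val / 2 := by
        rw [hpi]; simp only [hf, h, if_pos]
        exact ZMod.val_natCast_of_lt (by omega)
      rw [hrho]; simp only [h1]
      rw [if_pos (by omega), show 2 * (z.val / 2) = z.val by omega, hcast]
    · have h1 : (pi z).val = k + z.val / 2 := by
        rw [hpi]; simp only [hf, h, if_neg, if_false]
        exact ZMod.val_natCast_of_lt (by omega)
      rw [hrho]; simp only [h1]
      rw [if_neg (by omega), show 2 * (k + z.val / 2 - k) + 1 = z.val by omega, hcast]
  set op : A → A → A := fun x y => pi (x + y) with hop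
  have op_comm : ∀ x y, op x y = op y x := by intro x y; simp only [hop, add_comm]
  have op_solve : ∀ x y, op x (rho y - x) = y := by
    intro x y; simp only [hop, show x + (rho y - x) = rho y by ring, pirho]
  have op_inj : ∀ x b b', op x b = op x b' → b = b' := by
    intro x b b' h
    simp only [hop] at h
    have := congrArg rho h
    rw [rhopi, rhopi] at this
    exact add_left_cancel this
  have F1 : ∀ x : A, x.val < k → op x x = x := by
    intro x hx
    have hxx : (x + x).val = 2 * x.val := by
      rw [ZMod.val_add, Nat.mod_eq_of_lt (by omega)]; ring
    simp only [hop, hpi, hf, hxx]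
    rw [if_pos (by omega), show 2 * x.val / 2 = x.val by omega, hcast]
  have F2 : ∀ x : A, k ≤ x.val → (op x x).val = x.val - k := by
    intro x hx
    have hz : x.val < 2 * k := ZMod.val_lt x
    have hxx : (x + x).val = 2 * x.val - 2 * k := by
      rw [ZMod.val_add]
      have : x.val + x.val = (2 * x.val - 2 * k) + 1 * (2 * k) := by omega
      rw [this, Nat.add_mul_mod_self_right, Nat.mod_eq_of_lt (by omega)]
    simp only [hop, hpi, hf, hxx]
    rw [if_pos (by omega), show (2 * x.val - 2 * k) / 2 = x.val - k by omega]
    exact ZMod.val_natCast_of_lt (by omega)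
  have F3 : ∀ x : A, k ≤ x.val → op x x ≠ x := by
    intro x hx h
    have h2 := F2 x hx
    rw [h] at h2
    omega
  have F4 : ∀ a b : A, k ≤ a.val → k ≤ b.val → op a a = op b b → a = b := by
    intro a b ha hb h
    have h1 := F2 a ha
    have h2 := F2 b hb
    rw [h] at h1
    have ha2 : a.val < 2 * k := ZMod.val_lt a
    have hb2 : b.val < 2 * k := ZMod.val_lt b
    exact ZMod.val_injective _ (by omega)
  have F5 : ∀ y : A, y.val < k → ∃ a : A, k ≤ a.val ∧ op a a = y := by
    intro y hy
    refine ⟨((y.val + k : ℕ) : A), ?_, ?_⟩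
    · rw [ZMod.val_natCast_of_lt (by omega)]; omega
    · have hv : (((y.val + k : ℕ) : A)).val = y.val + k := ZMod.val_natCast_of_lt (by omega)
      have := F2 _ (by rw [hv]; omega)
      rw [hv] at this
      apply ZMod.val_injective
      rw [this]; omega
  -- ZMod 3 facts
  have hall : ∀ i : ZMod 3, i = 0 ∨ i = 1 ∨ i = 2 := by decide
  have hne1 : ∀ i : ZMod 3, i ≠ i + 1 := by decide
  have hne2 : ∀ i : ZMod 3, i ≠ i + 1 + 1 := by decide
  have hZ3 : ∀ i j : ZMod 3, i = j ∨ j = i + 1 ∨ i = j + 1 := by decide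
  set V := Option (A × ZMod 3) with hV
  set T : Finset (Finset V) :=
    ((Finset.univ.filter fun x : A => x.val < k).image
      fun x => ({some (x, 0), some (x, 1), some (x, 2)} : Finset V)) ∪
    ((Finset.univ.filter fun p : A × ZMod 3 => k ≤ p.1.val).image
      fun p => ({none, some (p.1, p.2), some (op p.1 p.1, p.2 + 1)} : Finset V)) ∪
    ((Finset.univ.filter fun p : A × A × ZMod 3 => p.1 ≠ p.2.1).image
      fun p => ({some (p.1, p.2.2), some (p.2.1, p.2.2),
        some (op p.1 p.2.1, p.2.2 + 1)} : Finset V)) with hT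
  have memT : ∀ t : Finset V, t ∈ T ↔
      (∃ x : A, x.val < k ∧ t = {some (x, 0), some (x, 1), some (x, 2)}) ∨
      (∃ (x : A) (j : ZMod 3), k ≤ x.val ∧ t = {none, some (x, j), some (op x x, j + 1)}) ∨
      (∃ (x y : A) (j : ZMod 3), x ≠ y ∧
        t = {some (x, j), some (y, j), some (op x y, j + 1)}) := by
    intro t
    simp only [hT, Finset.mem_union, Finset.mem_image, Finset.mem_filter, Finset.mem_univ,
      true_and]
    constructor
    · rintro ((⟨x, hx, rfl⟩ | ⟨⟨x, j⟩, hx, rfl⟩) | ⟨⟨x, y, j⟩, hxy, rfl⟩)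
      · exact Or.inl ⟨x, hx, rfl⟩
      · exact Or.inr (Or.inl ⟨x, j, hx, rfl⟩)
      · exact Or.inr (Or.inr ⟨x, y, j, hxy, rfl⟩)
    · rintro (⟨x, hx, rfl⟩ | ⟨x, j, hx, rfl⟩ | ⟨x, y, j, hxy, rfl⟩)
      · exact Or.inl (Or.inl ⟨x, hx, rfl⟩)
      · exact Or.inl (Or.inr ⟨⟨x, j⟩, hx, rfl⟩)
      · exact Or.inr ⟨⟨x, y, j⟩, hxy, rfl⟩
  have hmem1 : ∀ (x : A) (i : ZMod 3),
      some (x, i) ∈ ({some (x, 0), some (x, 1), some (x, 2)} : Finset V) := by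
    intro x i
    rcases hall i with rfl | rfl | rfl <;> simp
  refine ⟨T, ?_, ?_⟩
  · intro t ht
    rw [memT] at ht
    rcases ht with ⟨x, hx, rfl⟩ | ⟨x, j, hx, rfl⟩ | ⟨x, y, j, hxy, rfl⟩
    · exact ⟨some (x, 0), some (x, 1), some (x, 2),
        by simp only [ne_eq, Option.some.injEq, Prod.mk.injEq, not_and]; intro _; decide,
        by simp only [ne_eq, Option.some.injEq, Prod.mk.injEq, not_and]; intro _; decide,
        by simp only [ne_eq, Option.some.injEq, Prod.mk.injEq, not_and]; intro _; decide, rfl⟩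
    · exact ⟨none, some (x, j), some (op x x, j + 1), by simp, by simp,
        by simp only [ne_eq, Option.some.injEq, Prod.mk.injEq, not_and];
           intro _; exact hne1 j, rfl⟩
    · exact ⟨some (x, j), some (y, j), some (op x y, j + 1),
        by simp [hxy],
        by simp only [ne_eq, Option.some.injEq, Prod.mk.injEq, not_and]; intro _; exact hne1 j,
        by simp only [ne_eq, Option.some.injEq, Prod.mk.injEq, not_and]; intro _; exact hne1 j,
        rfl⟩
  · -- helper for pairs {∞, (y,j)}
    have Hinf : ∀ (y : A) (j : ZMod 3),
        ∃! t, t ∈ T ∧ (none : V) ∈ t ∧ some (y, j) ∈ t := by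
      intro y j
      by_cases hy : k ≤ y.val
      · refine ⟨{none, some (y, j), some (op y y, j + 1)},
          ⟨(memT _).2 (Or.inr (Or.inl ⟨y, j, hy, rfl⟩)), by simp, by simp⟩, ?_⟩
        rintro u ⟨hu, hnu, hyu⟩
        rw [memT] at hu
        rcases hu with ⟨z, hz, rfl⟩ | ⟨a, l, ha, rfl⟩ | ⟨a, b, l, hab, rfl⟩
        · simp at hnu
        · simp only [Finset.mem_insert, Finset.mem_singleton, Option.some.injEq,
            Prod.mk.injEq, reduceCtorEq, false_or] at hyu
          rcases hyu with ⟨rfl, rfl⟩ | ⟨h1, h2⟩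
          · rfl
          · exfalso
            have h3 := F2 a ha
            have h4 := ZMod.val_lt a
            rw [← h1] at h3
            omega
        · simp at hnu
      · obtain ⟨a, ha, hay⟩ := F5 y (by omega)
        refine ⟨{none, some (a, j - 1), some (y, j)},
          ⟨(memT _).2 (Or.inr (Or.inl ⟨a, j - 1, ha, by rw [hay, sub_add_cancel]⟩)),
            by simp, by simp⟩, ?_⟩
        rintro u ⟨hu, hnu, hyu⟩
        rw [memT] at hu
        rcases hu with ⟨z, hz, rfl⟩ | ⟨b, l, hb, rfl⟩ | ⟨a', b, l, hab, rfl⟩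
        · simp at hnu
        · simp only [Finset.mem_insert, Finset.mem_singleton, Option.some.injEq,
            Prod.mk.injEq, reduceCtorEq, false_or] at hyu
          rcases hyu with ⟨rfl, rfl⟩ | ⟨h1, h2⟩
          · omega
          · have hba : b = a := F4 b a hb ha (by rw [hay, ← h1])
            have hl : l = j - 1 := by rw [h2]; ring
            subst hba; subst hl
            rw [hay, sub_add_cancel]
        · simp at hnu
    -- helper for mixed-level pairs (x,i), (y,i+1), all x y
    have Hmix : ∀ (x y : A) (i : ZMod 3),
        ∃! t, t ∈ T ∧ some (x, i) ∈ t ∧ some (y, i + 1) ∈ t := by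
      intro x y i
      by_cases hyd : y = op x x
      · by_cases hx : x.val < k
        · have hxy : y = x := by rw [hyd, F1 x hx]
          subst hxy
          refine ⟨{some (y, 0), some (y, 1), some (y, 2)},
            ⟨(memT _).2 (Or.inl ⟨y, hx, rfl⟩), hmem1 y i, hmem1 y (i + 1)⟩, ?_⟩
          rintro u ⟨hu, hxu, hyu⟩
          rw [memT] at hu
          rcases hu with ⟨z, hz, rfl⟩ | ⟨a, l, ha, rfl⟩ | ⟨a, b, l, hab, rfl⟩
          · simp only [Finset.mem_insert, Finset.mem_singleton, Option.some.injEq,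
              Prod.mk.injEq] at hxu
            have : y = z := by tauto
            subst this
            rfl
          · exfalso
            simp only [Finset.mem_insert, Finset.mem_singleton, Option.some.injEq,
              Prod.mk.injEq, reduceCtorEq, false_or] at hxu hyu
            rcases hxu with ⟨rfl, rfl⟩ | ⟨h1, h2⟩
            · rcases hyu with ⟨-, h⟩ | ⟨h3, -⟩
              · exact hne1 i h.symm
              · exact F3 y ha h3.symm
            · rcases hyu with ⟨-, h⟩ | ⟨-, h4⟩
              · exact hne2 i (by rw [← h] at h2; exact h2)
              · exact hne1 i (by rw [← h4] at h2; exact h2)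
          · exfalso
            simp only [Finset.mem_insert, Finset.mem_singleton, Option.some.injEq,
              Prod.mk.injEq] at hxu hyu
            rcases hxu with ⟨rfl, rfl⟩ | ⟨rfl, rfl⟩ | ⟨h1, h2⟩
            · rcases hyu with ⟨-, h⟩ | ⟨h3, h⟩ | ⟨h3, -⟩
              · exact hne1 i h.symm
              · exact hne1 i h.symm
              · exact hab (op_inj y b y (by rw [F1 y hx]; exact h3.symm)).symm
            · rcases hyu with ⟨h3, h⟩ | ⟨-, h⟩ | ⟨h3, -⟩
              · exact hne1 i h.symm
              · exact hne1 i h.symm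
              · exact hab (op_inj y a y (by rw [F1 y hx, op_comm]; exact h3.symm))
            · rcases hyu with ⟨-, h⟩ | ⟨-, h⟩ | ⟨-, h⟩
              · exact hne2 i (by rw [← h] at h2; exact h2)
              · exact hne2 i (by rw [← h] at h2; exact h2)
              · exact hne1 i (h2.trans h.symm)
        · push_neg at hx
          subst hyd
          refine ⟨{none, some (x, i), some (op x x, i + 1)},
            ⟨(memT _).2 (Or.inr (Or.inl ⟨x, i, hx, rfl⟩)), by simp, by simp⟩, ?_⟩
          rintro u ⟨hu, hxu, hyu⟩
          rw [memT] at hu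
          rcases hu with ⟨z, hz, rfl⟩ | ⟨a, l, ha, rfl⟩ | ⟨a, b, l, hab, rfl⟩
          · exfalso
            simp only [Finset.mem_insert, Finset.mem_singleton, Option.some.injEq,
              Prod.mk.injEq] at hxu hyu
            have h1 : x = z := by tauto
            have h2 : op x x = z := by tauto
            exact F3 x hx (h2.trans h1.symm)
          · simp only [Finset.mem_insert, Finset.mem_singleton, Option.some.injEq,
              Prod.mk.injEq, reduceCtorEq, false_or] at hxu hyu
            rcases hxu with ⟨rfl, rfl⟩ | ⟨h1, h2⟩
            · rcases hyu with ⟨-, h⟩ | ⟨-, -⟩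
              · exact absurd h.symm (hne1 i)
              · rfl
            · rcases hyu with ⟨-, h⟩ | ⟨-, h⟩
              · exact absurd (h2.trans (by rw [← h])) (hne2 i)
              · exact absurd (h2.trans (by rw [← h])) (hne1 i)
          · exfalso
            simp only [Finset.mem_insert, Finset.mem_singleton, Option.some.injEq,
              Prod.mk.injEq] at hxu hyu
            rcases hxu with ⟨rfl, rfl⟩ | ⟨rfl, rfl⟩ | ⟨h1, h2⟩
            · rcases hyu with ⟨-, h⟩ | ⟨-, h⟩ | ⟨h3, -⟩
              · exact hne1 i h.symm
              · exact hne1 i h.symm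
              · exact hab (op_inj x b x (h3.symm)).symm
            · rcases hyu with ⟨-, h⟩ | ⟨-, h⟩ | ⟨h3, -⟩
              · exact hne1 i h.symm
              · exact hne1 i h.symm
              · exact hab (op_inj x a x (by rw [op_comm]; exact h3.symm))
            · rcases hyu with ⟨-, h⟩ | ⟨-, h⟩ | ⟨-, h⟩
              · exact hne2 i (by rw [← h] at h2; exact h2)
              · exact hne2 i (by rw [← h] at h2; exact h2)
              · exact hne1 i (h2.trans h.symm)
      · set b0 : A := rho y - x with hb0def
        have hb0 : op x b0 = y := op_solve x y
        have hxb0 : x ≠ b0 := by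
          intro h
          exact hyd (by rw [← hb0, ← h])
        refine ⟨{some (x, i), some (b0, i), some (y, i + 1)},
          ⟨(memT _).2 (Or.inr (Or.inr ⟨x, b0, i, hxb0, by rw [hb0]⟩)), by simp, by simp⟩, ?_⟩
        rintro u ⟨hu, hxu, hyu⟩
        rw [memT] at hu
        rcases hu with ⟨z, hz, rfl⟩ | ⟨a, l, ha, rfl⟩ | ⟨a, b, l, hab, rfl⟩
        · exfalso
          simp only [Finset.mem_insert, Finset.mem_singleton, Option.some.injEq,
            Prod.mk.injEq] at hxu hyu
          have h1 : x = z := by tauto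
          have h2 : y = z := by tauto
          subst h1
          exact hyd (h2.trans (F1 x hz).symm)
        · exfalso
          simp only [Finset.mem_insert, Finset.mem_singleton, Option.some.injEq,
            Prod.mk.injEq, reduceCtorEq, false_or] at hxu hyu
          rcases hxu with ⟨rfl, rfl⟩ | ⟨h1, h2⟩
          · rcases hyu with ⟨-, h⟩ | ⟨h3, -⟩
            · exact hne1 i h.symm
            · exact hyd h3
          · rcases hyu with ⟨-, h⟩ | ⟨-, h⟩
            · exact hne2 i (by rw [← h] at h2; exact h2)
            · exact hne1 i (h2.trans h.symm)
        · simp only [Finset.mem_insert, Finset.mem_singleton, Option.some.injEq,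
            Prod.mk.injEq] at hxu hyu
          rcases hxu with ⟨rfl, rfl⟩ | ⟨rfl, rfl⟩ | ⟨h1, h2⟩
          · rcases hyu with ⟨-, h⟩ | ⟨-, h⟩ | ⟨h3, -⟩
            · exact absurd h.symm (hne1 i)
            · exact absurd h.symm (hne1 i)
            · have : b = b0 := op_inj x b b0 (by rw [hb0]; exact h3.symm)
              subst this
              rw [hb0]
          · rcases hyu with ⟨-, h⟩ | ⟨-, h⟩ | ⟨h3, -⟩
            · exact absurd h.symm (hne1 i)
            · exact absurd h.symm (hne1 i)
            · have : a = b0 := op_inj x a b0 (by rw [hb0, op_comm]; exact h3.symm)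
              subst this
              rw [op_comm, hb0, Finset.insert_comm]
          · exfalso
            rcases hyu with ⟨-, h⟩ | ⟨-, h⟩ | ⟨-, h⟩
            · exact hne2 i (by rw [← h] at h2; exact h2)
            · exact hne2 i (by rw [← h] at h2; exact h2)
            · exact hne1 i (h2.trans h.symm)
    rintro p q hpq
    rcases p with _ | ⟨x, i⟩
    · rcases q with _ | ⟨y, j⟩
      · exact absurd rfl hpq
      · exact Hinf y j
    · rcases q with _ | ⟨y, j⟩
      · obtain ⟨t, ⟨ht, h1, h2⟩, hu⟩ := Hinf x i
        exact ⟨t, ⟨ht, h2, h1⟩, fun u ⟨ha, hb, hc⟩ => hu u ⟨ha, hc, hb⟩⟩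
      · rcases hZ3 i j with rfl | rfl | rfl
        · -- same level
          have hxy : x ≠ y := fun h => hpq (by rw [h])
          refine ⟨{some (x, i), some (y, i), some (op x y, i + 1)},
            ⟨(memT _).2 (Or.inr (Or.inr ⟨x, y, i, hxy, rfl⟩)), by simp, by simp⟩, ?_⟩
          rintro u ⟨hu, hxu, hyu⟩
          rw [memT] at hu
          rcases hu with ⟨z, hz, rfl⟩ | ⟨a, l, ha, rfl⟩ | ⟨a, b, l, hab, rfl⟩
          · exfalso
            simp only [Finset.mem_insert, Finset.mem_singleton, Option.some.injEq,
              Prod.mk.injEq] at hxu hyu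
            have h1 : x = z := by tauto
            have h2 : y = z := by tauto
            exact hxy (h1.trans h2.symm)
          · exfalso
            simp only [Finset.mem_insert, Finset.mem_singleton, Option.some.injEq,
              Prod.mk.injEq, reduceCtorEq, false_or] at hxu hyu
            rcases hxu with ⟨h1, h2⟩ | ⟨h1, h2⟩ <;> rcases hyu with ⟨h3, h4⟩ | ⟨h3, h4⟩
            · exact hxy (h1.trans h3.symm)
            · exact hne1 l (h2.symm.trans h4)
            · exact hne1 l (h4.symm.trans h2)
            · exact hxy (h1.trans h3.symm)
          · simp only [Finset.mem_insert, Finset.mem_singleton, Option.some.injEq,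
              Prod.mk.injEq] at hxu hyu
            rcases hxu with ⟨rfl, rfl⟩ | ⟨rfl, rfl⟩ | ⟨h1, h2⟩
            · rcases hyu with ⟨h3, -⟩ | ⟨rfl, -⟩ | ⟨h3, h4⟩
              · exact absurd h3.symm hxy
              · rfl
              · exact absurd h4 (hne1 i)
            · rcases hyu with ⟨rfl, -⟩ | ⟨h3, -⟩ | ⟨h3, h4⟩
              · rw [op_comm, Finset.insert_comm]
              · exact absurd h3.symm hxy
              · exact absurd h4 (hne1 i)
            · exfalso
              rcases hyu with ⟨-, h4⟩ | ⟨-, h4⟩ | ⟨h3, -⟩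
              · exact hne1 l (h4.symm.trans h2)
              · exact hne1 l (h4.symm.trans h2)
              · exact hxy (h1.trans h3.symm)
        · exact Hmix x y i
        · obtain ⟨t, ⟨ht, h1, h2⟩, hu⟩ := Hmix y x j
          exact ⟨t, ⟨ht, h2, h1⟩, fun u ⟨ha, hb, hc⟩ => hu u ⟨ha, hc, hb⟩⟩

theorem stmt4 (n : ℕ) (hn : 1 ≤ n) :
    (∃ P : Finset (Finset (Sym2 (Fin n))),
      (∀ t ∈ P, ∃ a b c : Fin n, a ≠ b ∧ a ≠ c ∧ b ≠ c ∧
        t = {s(a, b), s(a, c), s(b, c)}) ∧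
      (∀ e ∈ (⊤ : SimpleGraph (Fin n)).edgeFinset, ∃! t, t ∈ P ∧ e ∈ t)) ↔
    (n % 6 = 1 ∨ n % 6 = 3) := by
  constructor
  · rintro ⟨P, hP1, hP2⟩
    exact decomp_mod hn P hP1 hP2
  · intro hmod
    by_cases h1 : n = 1
    · subst h1
      apply sts_to_decomp (T := (∅ : Finset (Finset (Fin 1))))
      constructor
      · intro t ht; exact absurd ht (Finset.notMem_empty t)
      · intro a b hab; exact absurd (Subsingleton.elim a b) hab
    · rcases hmod with hm | hm
      · -- n = 6k+1, k ≥ 1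
        obtain ⟨k, rfl⟩ : ∃ k, n = 6 * k + 1 := ⟨n / 6, by omega⟩
        have hk : 1 ≤ k := by omega
        haveI : NeZero (2 * k) := ⟨by omega⟩
        obtain ⟨T, hT⟩ := skolem k hk
        have hcard : Fintype.card (Option (ZMod (2 * k) × ZMod 3)) = 6 * k + 1 := by
          rw [Fintype.card_option, Fintype.card_prod, ZMod.card, ZMod.card]
          ring
        exact sts_to_decomp (hT.map (Fintype.equivFinOfCardEq hcard))
      · -- n = 6k+3
        obtain ⟨k, rfl⟩ : ∃ k, n = 6 * k + 3 := ⟨n / 6, by omega⟩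
        haveI : NeZero (2 * k + 1) := ⟨by omega⟩
        obtain ⟨T, hT⟩ := bose k
        have hcard : Fintype.card (ZMod (2 * k + 1) × ZMod 3) = 6 * k + 3 := by
          rw [Fintype.card_prod, ZMod.card, ZMod.card]
          ring
        exact sts_to_decomp (hT.map (Fintype.equivFinOfCardEq hcard))
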